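/- Let (𝒞,∂,𝒜) be as above and let (𝒞',∂') be an ε-isolated subcomplex with nonzero homology. Let ξ ∈ 𝒞' be a cycle of ∂' representing a nonzero homology class of 𝒞' whose action 𝒜(ξ) is minimal among all such representatives. Then ξ is quasi ε-robust in 𝒞: for any vectors y, τ ∈ 𝒞 with 𝒜(τ) < 𝒜(ξ) and ∂y = ξ + τ, it holds that 𝒜(y) − 𝒜(ξ) > ε. -/

import Mathlib

open Finsupp

variable {ι : Type*} [Fintype ι] [DecidableEq ι]

/-- The action (filtration level) of a vector in the `ZMod 2`-vector space with
basis `ι` and basis actions `a : ι → ℝ`: the maximum of the actions of the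
basis elements appearing, with `𝒜(0) = ⊥`. -/
noncomputable def act (a : ι → ℝ) (v : ι →₀ ZMod 2) : EReal :=
  v.support.sup fun i => ((a i : ℝ) : EReal)

/-- `(𝒞',∂')`, spanned by the basis vectors indexed by `S`, is `ε`-isolated in
`(𝒞,∂)`: (i) for every nonzero `y ∈ 𝒞'`, `𝒜(y) − 𝒜((∂−∂')y) > ε`; (ii) for
every nonzero `y ∈ (𝒞')^⊥` and `ζ ∈ 𝒞'` with `ζ + ∂y ∈ (𝒞')^⊥`,
`𝒜(y) − 𝒜(ζ) > ε`. -/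
def IsIsolated (a : ι → ℝ) (d d' : (ι →₀ ZMod 2) →ₗ[ZMod 2] (ι →₀ ZMod 2))
    (S : Set ι) (ε : ℝ) : Prop :=
  (∀ y ∈ Finsupp.supported (ZMod 2) (ZMod 2) S, y ≠ 0 →
      act a ((d - d') y) + (ε : EReal) < act a y) ∧
  (∀ y ∈ Finsupp.supported (ZMod 2) (ZMod 2) Sᶜ, y ≠ 0 →
      ∀ ζ ∈ Finsupp.supported (ZMod 2) (ZMod 2) S,
        ζ + d y ∈ Finsupp.supported (ZMod 2) (ZMod 2) Sᶜ →
        act a ζ + (ε : EReal) < act a y)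

/-! ### Auxiliary lemmas -/

lemma zmod2_addself (x : ι →₀ ZMod 2) : x + x = 0 := by
  have h2 : (2 : ZMod 2) = 0 := rfl
  rw [← two_smul (ZMod 2) x, h2, zero_smul]

lemma zmod2_negself (x : ι →₀ ZMod 2) : -x = x := by
  have h : ∀ c : ZMod 2, -c = c := by decide
  ext i; rw [Finsupp.neg_apply, h]

lemma zmod2_sub (x y : ι →₀ ZMod 2) : x - y = x + y := by
  rw [sub_eq_add_neg, zmod2_negself]

lemma act_mono (a : ι → ℝ) {v w : ι →₀ ZMod 2} (h : v.support ⊆ w.support) :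
    act a v ≤ act a w := Finset.sup_mono h

lemma act_zero (a : ι → ℝ) : act a (0 : ι →₀ ZMod 2) = ⊥ := by
  simp [act]

lemma act_add_le (a : ι → ℝ) (v w : ι →₀ ZMod 2) :
    act a (v + w) ≤ max (act a v) (act a w) := by
  refine le_trans (Finset.sup_mono (Finsupp.support_add)) ?_
  rw [Finset.sup_union]
  exact le_rfl

lemma act_filter_le (a : ι → ℝ) (p : ι → Prop) [DecidablePred p] (v : ι →₀ ZMod 2) :
    act a (v.filter p) ≤ act a v := by
  apply act_mono
  rw [Finsupp.support_filter]
  exact Finset.filter_subset _ _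

lemma act_bot_lt (a : ι → ℝ) {v : ι →₀ ZMod 2} (hv : v ≠ 0) : ⊥ < act a v := by
  obtain ⟨i, hi⟩ := Finsupp.support_nonempty_iff.2 hv
  exact lt_of_lt_of_le (by simp : (⊥ : EReal) < ((a i : ℝ) : EReal))
    (Finset.le_sup (f := fun i => ((a i : ℝ) : EReal)) hi)

lemma zmod2_eq_of_add_eq_zero (x y : ι →₀ ZMod 2) (h : x + y = 0) : x = y := by
  have h2 : x + (y + y) = 0 + y := by rw [← add_assoc, h]
  rwa [zmod2_addself, add_zero, zero_add] at h2

lemma filter_eq_self_of_supported {S : Set ι} [DecidablePred (· ∈ S)] {f : ι →₀ ZMod 2}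
    (hf : f ∈ Finsupp.supported (ZMod 2) (ZMod 2) S) :
    f.filter (· ∈ S) = f := by
  ext i
  rw [Finsupp.filter_apply]
  split_ifs with h
  · rfl
  · exact (Finsupp.notMem_support_iff.1 fun hs => h ((Finsupp.mem_supported _ f).1 hf hs)).symm

lemma ereal_lt_of_add_lt_add_right {x y : EReal} {c : EReal} (h : x + c < y + c) : x < y := by
  by_contra hc
  push_neg at hc
  exact absurd h (not_lt.mpr (add_le_add hc (le_refl c)))

/-- Quasi `ε`-robustness of the minimal-action representative: if `(𝒞',∂')` is
an `ε`-isolated subcomplex with nonzero homology and `ξ ∈ 𝒞'` is a `∂'`-cycle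
representing a nonzero homology class of `𝒞'` with minimal action among all
such representatives, then for any `y, τ` with `𝒜(τ) < 𝒜(ξ)` and `∂y = ξ + τ`
we have `𝒜(y) − 𝒜(ξ) > ε`. -/
theorem minimal_cycle_quasi_robust
    (a : ι → ℝ) (ha : Function.Injective a)
    (d d' : (ι →₀ ZMod 2) →ₗ[ZMod 2] (ι →₀ ZMod 2))
    (hd : d ∘ₗ d = 0) (hd' : d' ∘ₗ d' = 0)
    (S : Set ι) (ε : ℝ) (hε : 0 < ε)
    (hsub : ∀ y ∈ Finsupp.supported (ZMod 2) (ZMod 2) S,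
      d' y ∈ Finsupp.supported (ZMod 2) (ZMod 2) S)
    (hiso : IsIsolated a d d' S ε)
    (ξ : ι →₀ ZMod 2)
    (hξS : ξ ∈ Finsupp.supported (ZMod 2) (ZMod 2) S)
    (hξcycle : d' ξ = 0)
    (hξnontriv : ∀ y ∈ Finsupp.supported (ZMod 2) (ZMod 2) S, d' y ≠ ξ)
    (hξmin : ∀ ξ' ∈ Finsupp.supported (ZMod 2) (ZMod 2) S, d' ξ' = 0 →
      (∀ y ∈ Finsupp.supported (ZMod 2) (ZMod 2) S, d' y ≠ ξ') →
      act a ξ ≤ act a ξ') :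
    ∀ y τ : ι →₀ ZMod 2, act a τ < act a ξ → d y = ξ + τ →
      act a ξ + (ε : EReal) < act a y := by
  classical
  intro y τ hτ hdy
  by_contra hcon
  push_neg at hcon
  -- ξ ≠ 0
  have hξne : ξ ≠ 0 := by
    intro h
    exact hξnontriv 0 (Submodule.zero_mem _) (by simp [h])
  have hξbot : ⊥ < act a ξ := act_bot_lt a hξne
  -- split y into S-part and Sᶜ-part
  set u : ι →₀ ZMod 2 := y.filter (· ∈ S) with hu_def
  set v : ι →₀ ZMod 2 := y.filter (fun i => ¬ i ∈ S) with hv_def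
  have hy : u + v = y := Finsupp.filter_pos_add_filter_neg y _
  have huS : u ∈ Finsupp.supported (ZMod 2) (ZMod 2) S := by
    rw [Finsupp.mem_supported]
    intro i hi
    rw [hu_def, Finsupp.support_filter, Finset.coe_filter] at hi
    exact hi.2
  have hvSc : v ∈ Finsupp.supported (ZMod 2) (ZMod 2) Sᶜ := by
    rw [Finsupp.mem_supported]
    intro i hi
    rw [hv_def, Finsupp.support_filter, Finset.coe_filter] at hi
    exact hi.2
  have huy : act a u ≤ act a y := act_filter_le a _ y
  have hvy : act a v ≤ act a y := act_filter_le a _ y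
  -- the error term e = (d - d') u has small action
  set e : ι →₀ ZMod 2 := (d - d') u with he_def
  have he : act a e < act a ξ := by
    by_cases hu0 : u = 0
    · rw [he_def, hu0, map_zero, act_zero]; exact hξbot
    · have h1 := hiso.1 u huS hu0
      have h2 : act a e + (ε : EReal) < act a ξ + (ε : EReal) :=
        lt_of_lt_of_le h1 (huy.trans hcon)
      exact ereal_lt_of_add_lt_add_right h2
  -- ζ = S-part of d v has small action
  set ζ : ι →₀ ZMod 2 := (d v).filter (· ∈ S) with hζ_def
  have hζS : ζ ∈ Finsupp.supported (ZMod 2) (ZMod 2) S := by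
    rw [Finsupp.mem_supported]
    intro i hi
    rw [hζ_def, Finsupp.support_filter, Finset.coe_filter] at hi
    exact hi.2
  have hζ : act a ζ < act a ξ := by
    by_cases hv0 : v = 0
    · rw [hζ_def, hv0, map_zero, Finsupp.filter_zero, act_zero]; exact hξbot
    · have hmem : ζ + d v ∈ Finsupp.supported (ZMod 2) (ZMod 2) Sᶜ := by
        rw [Finsupp.mem_supported]
        intro i hi
        simp only [Set.mem_compl_iff]
        intro hiS
        apply Finsupp.mem_support_iff.1 (Finset.mem_coe.1 hi)
        rw [Finsupp.add_apply, hζ_def, Finsupp.filter_apply, if_pos hiS]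
        exact (by decide : ∀ c : ZMod 2, c + c = 0) _
      have h1 := hiso.2 v hvSc hv0 ζ hζS hmem
      have h2 : act a ζ + (ε : EReal) < act a ξ + (ε : EReal) :=
        lt_of_lt_of_le h1 (hvy.trans hcon)
      exact ereal_lt_of_add_lt_add_right h2
  -- the modified cycle ξt = ξ + d' u
  set ξt : ι →₀ ZMod 2 := ξ + d' u with hξt_def
  have hξtS : ξt ∈ Finsupp.supported (ZMod 2) (ZMod 2) S :=
    Submodule.add_mem _ hξS (hsub u huS)
  have hξtcyc : d' ξt = 0 := by
    have h0 : d' (d' u) = 0 := by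
      have := DFunLike.congr_fun hd' u
      simpa [LinearMap.comp_apply] using this
    rw [hξt_def, map_add, hξcycle, h0, add_zero]
  have hξtnb : ∀ w ∈ Finsupp.supported (ZMod 2) (ZMod 2) S, d' w ≠ ξt := by
    intro w hw hwe
    apply hξnontriv (w + u) (Submodule.add_mem _ hw huS)
    rw [map_add, hwe, hξt_def, add_assoc, zmod2_addself, add_zero]
  have hmin : act a ξ ≤ act a ξt := hξmin ξt hξtS hξtcyc hξtnb
  -- key identity: ξt = τ + d v + e
  have hdu : d u + d v = ξ + τ := by rw [← map_add, hy, hdy]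
  have hξteq : ξt = τ + d v + e := by
    have hsa : e = d u + d' u := by
      rw [he_def, LinearMap.sub_apply, zmod2_sub]
    have key : ξt + (τ + d v + e) = 0 := by
      rw [hξt_def, hsa]
      have : ξ + d' u + (τ + d v + (d u + d' u)) =
          (d' u + d' u) + ((ξ + τ) + (d u + d v)) := by abel
      rw [this, zmod2_addself, zero_add, hdu, zmod2_addself]
    exact zmod2_eq_of_add_eq_zero _ _ key
  -- estimate act ξt
  have hfilt : ξt = τ.filter (· ∈ S) + ζ + e.filter (· ∈ S) := by
    conv_lhs => rw [← filter_eq_self_of_supported hξtS]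
    rw [hξteq, Finsupp.filter_add, Finsupp.filter_add, ← hζ_def]
  have hlt : act a ξt < act a ξ := by
    rw [hfilt]
    calc act a (τ.filter (· ∈ S) + ζ + e.filter (· ∈ S))
        ≤ max (act a (τ.filter (· ∈ S) + ζ)) (act a (e.filter (· ∈ S))) :=
          act_add_le a _ _
      _ ≤ max (max (act a (τ.filter (· ∈ S))) (act a ζ)) (act a (e.filter (· ∈ S))) := by
          exact max_le_max (act_add_le a _ _) le_rfl
      _ < act a ξ := by
          apply max_lt (max_lt _ hζ) _
          · exact lt_of_le_of_lt (act_filter_le a _ τ) hτ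
          · exact lt_of_le_of_lt (act_filter_le a _ e) he
  exact absurd hmin (not_le.mpr hlt)
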